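/- For every integer n ≥ 1, the number of inversion sequences of length n avoiding both patterns 010 and 011 equals the sum ∑_{k=0}^{n−1} (n−k)^k, i.e. |I_n(010,011)| = ∑_{k=0}^{n−1} (n−k)^k. -/
import Mathlib


/-- An inversion sequence of length `n` (0-indexed): `e i ≤ i` for all `i`. -/
def InvSeq {n : ℕ} (e : Fin n → ℕ) : Prop := ∀ i : Fin n, e i ≤ (i : ℕ)

/-- `e` contains the pattern `p` (a word of nonnegative integers): there is a
strictly increasing choice of positions on which `e` is order-isomorphic to `p`. -/
def Contains {n : ℕ} (e : Fin n → ℕ) (p : List ℕ) : Prop :=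
  ∃ s : Fin p.length → Fin n, StrictMono s ∧
    ∀ a b : Fin p.length,
      (p.get a < p.get b ↔ e (s a) < e (s b)) ∧
      (p.get a = p.get b ↔ e (s a) = e (s b))

/-- `e` avoids the pattern `p`. -/
def Avoids {n : ℕ} (e : Fin n → ℕ) (p : List ℕ) : Prop := ¬ Contains e p

/-- The number of zero entries of `e`. -/
def zeroStat {n : ℕ} (e : Fin n → ℕ) : ℕ :=
  (Finset.univ.filter (fun i : Fin n => e i = 0)).card

/-- The number of distinct positive values among the entries of `e`. -/
def distStat {n : ℕ} (e : Fin n → ℕ) : ℕ :=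
  ((Finset.univ.image e).filter (fun v => 0 < v)).card

/-- The number of repeated entries of `e`: `n - dist e`. -/
def repStat {n : ℕ} (e : Fin n → ℕ) : ℕ := n - distStat e

/-- The number of saturated entries of `e` (1-indexed: `e_i = i - 1`). -/
def satuStat {n : ℕ} (e : Fin n → ℕ) : ℕ :=
  (Finset.univ.filter (fun i : Fin n => e i = (i : ℕ))).card

def Cond {n : ℕ} (e : Fin n → ℕ) : Prop :=
  ∀ i j : Fin n, i < j → 0 < e i → 0 < e j ∧ e i ≠ e j

lemma avoid_iff {n : ℕ} (hn : 1 ≤ n) (e : Fin n → ℕ) (he : InvSeq e) :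
    (Avoids e [0,1,0] ∧ Avoids e [0,1,1]) ↔ Cond e := by
  have h0 : e ⟨0, hn⟩ = 0 := Nat.le_zero.mp (he ⟨0, hn⟩)
  constructor
  · rintro ⟨ha, hb⟩ i j hij hpos
    have h0i : (⟨0, hn⟩ : Fin n) < i := by
      rcases Nat.eq_zero_or_pos (i : ℕ) with h | h
      · exfalso; have : i = ⟨0, hn⟩ := Fin.ext h; rw [this, h0] at hpos; omega
      · exact h
    by_cases hj0 : e j = 0
    · -- contains 010
      exfalso; apply ha
      refine ⟨![⟨0, hn⟩, i, j], ?_, ?_⟩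
      · intro a b hab
        fin_cases a <;> fin_cases b <;> simp_all <;> omega
      · intro a b
        fin_cases a <;> fin_cases b <;>
          simp [List.get, h0, hj0] <;> omega
    · constructor
      · omega
      · intro heq
        -- contains 011
        apply hb
        refine ⟨![⟨0, hn⟩, i, j], ?_, ?_⟩
        · intro a b hab
          fin_cases a <;> fin_cases b <;> simp_all <;> omega
        · intro a b
          fin_cases a <;> fin_cases b <;>
            simp [List.get, h0, heq] <;> omega
  · intro hc
    constructor
    · rintro ⟨s, hs, hiff⟩
      have h01 : e (s ⟨0, by norm_num⟩) < e (s ⟨1, by norm_num⟩) :=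
        (hiff ⟨0, by norm_num⟩ ⟨1, by norm_num⟩).1.mp (by norm_num)
      have h02 : e (s ⟨0, by norm_num⟩) = e (s ⟨2, by norm_num⟩) :=
        (hiff ⟨0, by norm_num⟩ ⟨2, by norm_num⟩).2.mp (by norm_num)
      rcases Nat.eq_zero_or_pos (e (s ⟨0, by norm_num⟩)) with h | h
      · have := (hc (s ⟨1, by norm_num⟩) (s ⟨2, by norm_num⟩)
          (hs (by decide)) (by omega)).1
        omega
      · have := (hc (s ⟨0, by norm_num⟩) (s ⟨2, by norm_num⟩)
          (hs (by decide)) h).2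
        omega
    · rintro ⟨s, hs, hiff⟩
      have h01 : e (s ⟨0, by norm_num⟩) < e (s ⟨1, by norm_num⟩) :=
        (hiff ⟨0, by norm_num⟩ ⟨1, by norm_num⟩).1.mp (by norm_num)
      have h12 : e (s ⟨1, by norm_num⟩) = e (s ⟨2, by norm_num⟩) :=
        (hiff ⟨1, by norm_num⟩ ⟨2, by norm_num⟩).2.mp (by norm_num)
      have := (hc (s ⟨1, by norm_num⟩) (s ⟨2, by norm_num⟩)
        (hs (by decide)) (by omega)).2
      omega


/-- distinct-value sequences with staircase bounds -/
def AuxS (k m : ℕ) : Type := {f : Fin k → ℕ // Function.Injective f ∧ ∀ j : Fin k, f j < m + (j : ℕ)}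

instance auxS_finite (k m : ℕ) : Finite (AuxS k m) := by
  apply Finite.of_injective (fun f : AuxS k m => fun j : Fin k => (⟨f.1 j, by
    have := f.2.2 j; have := j.isLt; omega⟩ : Fin (m + k)))
  intro f g h
  apply Subtype.ext; funext j
  exact congrArg Fin.val (congrFun h j)

lemma auxS_card (m : ℕ) : ∀ k, Nat.card (AuxS k m) = m ^ k := by
  intro k
  induction k with
  | zero =>
    haveI : Unique (AuxS 0 m) := {
      default := ⟨fun j => j.elim0, fun a => a.elim0, fun j => j.elim0⟩
      uniq := by intro a; apply Subtype.ext; funext j; exact j.elim0 }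
    simp [Nat.card_unique]
  | succ k ih =>
    have hFib : ∀ g : AuxS k m, Finite {v : ℕ // v < m + k ∧ ∀ j : Fin k, v ≠ g.1 j} := by
      intro g
      apply Finite.of_injective (fun v : {v : ℕ // v < m + k ∧ ∀ j : Fin k, v ≠ g.1 j} =>
        (⟨v.1, v.2.1⟩ : Fin (m + k)))
      intro a b h
      exact Subtype.ext (congrArg Fin.val h)
    have E : (Σ g : AuxS k m, {v : ℕ // v < m + k ∧ ∀ j : Fin k, v ≠ g.1 j}) ≃ AuxS (k+1) m := by
      apply Equiv.ofBijective (fun gv => ⟨Fin.snoc gv.1.1 gv.2.1, by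
          constructor
          · intro a b hab
            induction a using Fin.lastCases with
            | last =>
              induction b using Fin.lastCases with
              | last => rfl
              | cast b =>
                simp only [Fin.snoc_last, Fin.snoc_castSucc] at hab
                exact absurd hab (gv.2.2.2 b)
            | cast a =>
              induction b using Fin.lastCases with
              | last =>
                simp only [Fin.snoc_last, Fin.snoc_castSucc] at hab
                exact absurd hab.symm (gv.2.2.2 a)
              | cast b =>
                simp only [Fin.snoc_castSucc] at hab
                exact congrArg Fin.castSucc (gv.1.2.1 hab)
          · intro j
            induction j using Fin.lastCases with
            | last => simpa [Fin.snoc_last] using gv.2.2.1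
            | cast j =>
              simp only [Fin.snoc_castSucc]
              have := gv.1.2.2 j
              simp only [Fin.coe_castSucc]
              omega⟩)
      constructor
      · rintro ⟨⟨g, hg⟩, ⟨v, hv⟩⟩ ⟨⟨g', hg'⟩, ⟨v', hv'⟩⟩ h
        have h' := congrArg Subtype.val h
        simp only at h'
        obtain rfl : g = g' := by
          funext j
          have := congrFun h' (Fin.castSucc j)
          simpa [Fin.snoc_castSucc] using this
        obtain rfl : v = v' := by
          have := congrFun h' (Fin.last k)
          simpa [Fin.snoc_last] using this
        rfl
      · rintro ⟨f, hf1, hf2⟩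
        refine ⟨⟨⟨f ∘ Fin.castSucc, fun a b hab => Fin.castSucc_injective _ (hf1 hab),
          fun j => by simpa using hf2 j.castSucc⟩,
          ⟨f (Fin.last k), by simpa using hf2 (Fin.last k), fun j hj => by
            have := hf1 hj
            exact absurd this.symm (Fin.ne_last_of_lt (Fin.castSucc_lt_last j))⟩⟩, ?_⟩
        apply Subtype.ext
        funext i
        induction i using Fin.lastCases with
        | last => simp [Fin.snoc_last]
        | cast i => simp [Fin.snoc_castSucc]
    rw [← Nat.card_congr E]
    haveI : Fintype (AuxS k m) := Fintype.ofFinite _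
    haveI : ∀ g : AuxS k m, Fintype {v : ℕ // v < m + k ∧ ∀ j : Fin k, v ≠ g.1 j} := fun g =>
      Fintype.ofFinite _
    rw [Nat.card_eq_fintype_card, Fintype.card_sigma]
    have hfib : ∀ g : AuxS k m,
        Fintype.card {v : ℕ // v < m + k ∧ ∀ j : Fin k, v ≠ g.1 j} = m := by
      intro g
      have E2 : {v : ℕ // v < m + k ∧ ∀ j : Fin k, v ≠ g.1 j} ≃
          {v : ℕ // v ∈ Finset.range (m + k) \ Finset.image g.1 Finset.univ} :=
        Equiv.subtypeEquivRight (by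
          intro v
          simp only [Finset.mem_sdiff, Finset.mem_range, Finset.mem_image, Finset.mem_univ,
            true_and, not_exists]
          constructor
          · rintro ⟨h1, h2⟩; exact ⟨h1, fun j hj => h2 j hj.symm⟩
          · rintro ⟨h1, h2⟩; exact ⟨h1, fun j hj => h2 j hj.symm⟩)
      rw [Fintype.card_congr E2, Fintype.card_coe]
      rw [Finset.card_sdiff_of_subset]
      · rw [Finset.card_image_of_injective _ g.2.1, Finset.card_range, Finset.card_univ,
          Fintype.card_fin]
        omega
      · intro x hx
        simp only [Finset.mem_image, Finset.mem_univ, true_and] at hx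
        obtain ⟨j, rfl⟩ := hx
        have h1 := g.2.2 j; have h2 := j.isLt
        simp only [Finset.mem_range]; omega
    simp only [hfib, Finset.sum_const, Finset.card_univ, smul_eq_mul]
    rw [← Nat.card_eq_fintype_card, ih]
    ring

def posN {n : ℕ} (e : Fin n → ℕ) : ℕ := (Finset.univ.filter fun i : Fin n => 0 < e i).card

lemma card_filter_le (n a : ℕ) :
    (Finset.univ.filter fun i : Fin n => a ≤ (i : ℕ)).card = n - a := by
  rcases lt_or_ge a n with h | h
  · have heq : (Finset.univ.filter fun i : Fin n => a ≤ (i : ℕ)) = Finset.Ici (⟨a, h⟩ : Fin n) := by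
      ext i
      simp [Fin.le_def]
    rw [heq, Fin.card_Ici]
  · have heq : (Finset.univ.filter fun i : Fin n => a ≤ (i : ℕ)) = ∅ := by
      ext i
      simp only [Finset.mem_filter, Finset.mem_univ, true_and, Finset.notMem_empty, iff_false,
        not_le]
      exact lt_of_lt_of_le i.isLt h
    rw [heq]
    simp
    omega

lemma pos_iff {n : ℕ} (e : Fin n → ℕ) (he : InvSeq e) (hc : Cond e) (i : Fin n) :
    0 < e i ↔ n - posN e ≤ (i : ℕ) := by
  have hin := i.isLt
  have hple : posN e ≤ n := by
    have := Finset.card_filter_le Finset.univ (fun i : Fin n => 0 < e i)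
    simpa [posN] using this
  constructor
  · intro h
    have hsub : Finset.Ici i ⊆ Finset.univ.filter fun j : Fin n => 0 < e j := by
      intro j hj
      simp only [Finset.mem_Ici] at hj
      rcases eq_or_lt_of_le hj with rfl | hlt
      · simp [h]
      · simp [(hc i j hlt h).1]
    have := Finset.card_le_card hsub
    rw [Fin.card_Ici] at this
    have : n - (i : ℕ) ≤ posN e := this
    omega
  · intro h
    by_contra h'
    have hz : e i = 0 := by omega
    have hsub : (Finset.univ.filter fun j : Fin n => 0 < e j) ⊆ Finset.Ioi i := by
      intro j hj
      simp only [Finset.mem_filter, Finset.mem_univ, true_and] at hj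
      simp only [Finset.mem_Ioi]
      by_contra hle
      push_neg at hle
      rcases eq_or_lt_of_le hle with rfl | hlt
      · omega
      · have := (hc j i hlt hj).1; omega
    have := Finset.card_le_card hsub
    rw [Fin.card_Ioi] at this
    have : posN e ≤ n - 1 - (i : ℕ) := this
    omega

lemma posN_lt {n : ℕ} (hn : 1 ≤ n) (e : Fin n → ℕ) (he : InvSeq e) : posN e < n := by
  have hss : (Finset.univ.filter fun i : Fin n => 0 < e i) ⊂ Finset.univ := by
    refine Finset.filter_ssubset.mpr ⟨⟨0, hn⟩, Finset.mem_univ _, ?_⟩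
    have h0 : e ⟨0, hn⟩ = 0 := Nat.le_zero.mp (he ⟨0, hn⟩)
    simp [h0]
  have := Finset.card_lt_card hss
  simpa [posN] using this

def buildE (n : ℕ) (k : Fin n) (f : AuxS k (n - k)) : Fin n → ℕ :=
  fun i => if h : n - (k : ℕ) ≤ (i : ℕ) then
    f.1 ⟨(i : ℕ) - (n - (k : ℕ)), by have := i.isLt; have := k.isLt; omega⟩ + 1 else 0

lemma buildE_pos {n : ℕ} (k : Fin n) (f : AuxS k (n - k)) (i : Fin n) :
    0 < buildE n k f i ↔ n - (k : ℕ) ≤ (i : ℕ) := by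
  unfold buildE
  split <;> simp_all

lemma buildE_invSeq {n : ℕ} (k : Fin n) (f : AuxS k (n - k)) : InvSeq (buildE n k f) := by
  intro i
  unfold buildE
  split
  · next h =>
    have hb := f.2.2 ⟨(i : ℕ) - (n - (k : ℕ)), by have := i.isLt; have := k.isLt; omega⟩
    simp only at hb
    have := i.isLt; have := k.isLt
    omega
  · omega

lemma buildE_cond {n : ℕ} (k : Fin n) (f : AuxS k (n - k)) : Cond (buildE n k f) := by
  intro i j hij hpos
  rw [buildE_pos] at hpos
  have hj : n - (k : ℕ) ≤ (j : ℕ) := le_trans hpos (le_of_lt hij)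
  constructor
  · rw [buildE_pos]; exact hj
  · unfold buildE
    rw [dif_pos hpos, dif_pos hj]
    intro heq
    simp only [Nat.add_right_cancel_iff] at heq
    have h3 := f.2.1 heq
    simp only [Fin.mk.injEq] at h3
    have hlt := Fin.lt_def.mp hij
    omega

lemma posN_buildE {n : ℕ} (k : Fin n) (f : AuxS k (n - k)) : posN (buildE n k f) = (k : ℕ) := by
  unfold posN
  have : (Finset.univ.filter fun i : Fin n => 0 < buildE n k f i) =
      (Finset.univ.filter fun i : Fin n => n - (k : ℕ) ≤ (i : ℕ)) := by
    apply Finset.filter_congr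
    intro i _
    simp [buildE_pos]
  rw [this, card_filter_le]
  have := k.isLt
  omega

lemma buildE_at {n : ℕ} (k : Fin n) (f : AuxS k (n - k)) (j : Fin (k : ℕ))
    (h : n - (k : ℕ) + (j : ℕ) < n) :
    buildE n k f ⟨n - (k : ℕ) + (j : ℕ), h⟩ = f.1 j + 1 := by
  unfold buildE
  rw [dif_pos (Nat.le_add_right _ _)]
  congr 1
  apply congrArg
  apply Fin.ext
  simp

def mainMap (n : ℕ) : (Σ k : Fin n, AuxS (k : ℕ) (n - (k : ℕ))) →
    {e : Fin n → ℕ // InvSeq e ∧ Cond e} :=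
  fun kf => ⟨buildE n kf.1 kf.2, buildE_invSeq _ _, buildE_cond _ _⟩

lemma mainMap_bij (n : ℕ) (hn : 1 ≤ n) : Function.Bijective (mainMap n) := by
  constructor
  · rintro ⟨k, f⟩ ⟨k', f'⟩ h
    have he : buildE n k f = buildE n k' f' := congrArg Subtype.val h
    have hk : (k : ℕ) = (k' : ℕ) := by
      have h1 := posN_buildE k f
      have h2 := posN_buildE k' f'
      rw [he] at h1
      omega
    obtain rfl : k = k' := Fin.ext hk
    obtain rfl : f = f' := by
      apply Subtype.ext
      funext j
      have hjk := j.isLt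
      have hkn := k.isLt
      have hcf := congrFun he ⟨n - (k : ℕ) + (j : ℕ), by omega⟩
      rw [buildE_at, buildE_at] at hcf
      omega
    rfl
  · rintro ⟨e, he, hc⟩
    have hkn : posN e < n := posN_lt hn e he
    have hbnd : ∀ j : Fin (posN e), n - posN e + (j : ℕ) < n := fun j => by
      have := j.isLt; omega
    have hpos : ∀ j : Fin (posN e), 0 < e ⟨n - posN e + (j : ℕ), hbnd j⟩ := fun j =>
      (pos_iff e he hc _).mpr (Nat.le_add_right _ _)
    refine ⟨⟨⟨posN e, hkn⟩, ⟨fun j => e ⟨n - posN e + (j : ℕ), hbnd j⟩ - 1, ?_, ?_⟩⟩, ?_⟩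
    · intro j1 j2 heq
      simp only at heq
      have hp1 := hpos j1
      have hp2 := hpos j2
      have hee : e ⟨n - posN e + (j1 : ℕ), hbnd j1⟩ = e ⟨n - posN e + (j2 : ℕ), hbnd j2⟩ := by
        omega
      rcases lt_trichotomy (j1 : ℕ) (j2 : ℕ) with hlt | heq' | hlt
      · have := (hc ⟨n - posN e + (j1 : ℕ), hbnd j1⟩ ⟨n - posN e + (j2 : ℕ), hbnd j2⟩
          (Fin.lt_def.mpr (by simp only [Fin.val_mk]; omega)) (hpos j1)).2
        exact absurd hee this
      · exact Fin.ext heq'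
      · have := (hc ⟨n - posN e + (j2 : ℕ), hbnd j2⟩ ⟨n - posN e + (j1 : ℕ), hbnd j1⟩
          (Fin.lt_def.mpr (by simp only [Fin.val_mk]; omega)) (hpos j2)).2
        exact absurd hee.symm this
    · intro j
      have h1 : e ⟨n - posN e + (j : ℕ), hbnd j⟩ ≤ n - posN e + (j : ℕ) := he _
      have h2 := hpos j
      simp only
      omega
    · apply Subtype.ext
      funext i
      show buildE n _ _ i = e i
      unfold buildE
      split
      · next hcond =>
        simp only [Fin.val_mk] at hcond ⊢
        have hii := i.isLt
        have hidx : ∀ pf : n - posN e + ((i : ℕ) - (n - posN e)) < n,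
            (⟨n - posN e + ((i : ℕ) - (n - posN e)), pf⟩ : Fin n) = i := fun pf =>
          Fin.ext (by simp only [Fin.val_mk]; omega)
        simp only [Fin.val_mk, hidx]
        have := (pos_iff e he hc i).mpr hcond
        omega
      · next hcond =>
        simp only [Fin.val_mk] at hcond
        have := (pos_iff e he hc i)
        omega

theorem stmt_6 (n : ℕ) (hn : 1 ≤ n) :
    Nat.card {e : Fin n → ℕ // InvSeq e ∧ Avoids e [0,1,0] ∧ Avoids e [0,1,1]}
      = ∑ k ∈ Finset.range n, (n - k) ^ k := by
  have E1 : {e : Fin n → ℕ // InvSeq e ∧ Avoids e [0,1,0] ∧ Avoids e [0,1,1]} ≃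
      {e : Fin n → ℕ // InvSeq e ∧ Cond e} :=
    Equiv.subtypeEquivRight (fun e => by
      constructor
      · rintro ⟨h1, h2⟩; exact ⟨h1, (avoid_iff hn e h1).mp h2⟩
      · rintro ⟨h1, h2⟩; exact ⟨h1, (avoid_iff hn e h1).mpr h2⟩)
  have E2 := (Equiv.ofBijective _ (mainMap_bij n hn)).symm
  rw [Nat.card_congr (E1.trans E2)]
  haveI : ∀ k : Fin n, Fintype (AuxS (k : ℕ) (n - (k : ℕ))) := fun k => Fintype.ofFinite _
  rw [Nat.card_eq_fintype_card, Fintype.card_sigma]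
  rw [← Fin.sum_univ_eq_sum_range (fun k => (n - k) ^ k) n]
  apply Finset.sum_congr rfl
  intro k _
  rw [← Nat.card_eq_fintype_card, auxS_card]
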